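/- Fix real constants κ, e, a real b ≠ 0, a sign ε ∈ {1, −1}, and an integer m ≥ 2. Let I ⊆ ℝ be a nonempty open interval with 0 ∉ I, and let φ : I → ℝ be twice differentiable and satisfy at every τ ∈ I both (F1): τ⁴φ″ + [(2−m)τ³ + bτ²]φ′ − mτ²φ = −εκτ²/2 and (F2): −τ⁴φ″ + [(m−1)τ³ − bτ²]φ′ + bτφ = eτ. Then there exist real constants A, B, C such that φ(τ) = A + B·Σ_{l=1}^{m} (b^{m−l}/(m−l)!)·τ^l + C·τ^m·exp(b/τ) for all τ ∈ I. -/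

import Mathlib

open Finset

noncomputable def S18 (b : ℝ) (m : ℕ) (τ : ℝ) : ℝ :=
  ∑ l ∈ Finset.Icc 1 m, b^(m-l) / ((m-l).factorial : ℝ) * τ^l

noncomputable def S18' (b : ℝ) (m : ℕ) (τ : ℝ) : ℝ :=
  ∑ l ∈ Finset.Icc 1 m, b^(m-l) / ((m-l).factorial : ℝ) * ((l:ℝ) * τ^(l-1))

lemma hasDerivAt_S18 (b : ℝ) (m : ℕ) (τ : ℝ) :
    HasDerivAt (S18 b m) (S18' b m τ) τ := by
  unfold S18 S18'
  exact HasDerivAt.fun_sum fun l _ => (hasDerivAt_pow l τ).const_mul _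

lemma S18_ode (b : ℝ) {m : ℕ} (hm : 1 ≤ m) (τ : ℝ) :
    τ^2 * S18' b m τ + (b - (m:ℝ)*τ) * S18 b m τ = b^m/((m-1).factorial : ℝ) * τ := by
  classical
  set w : ℕ → ℝ := fun l => if l ≤ m then b^(m-l+1)/((m-l).factorial : ℝ) * τ^l else 0 with hw
  have hterm : ∀ l ∈ Finset.Icc 1 m,
      τ^2 * (b^(m-l)/((m-l).factorial : ℝ) * ((l:ℝ) * τ^(l-1)))
        + (b - (m:ℝ)*τ) * (b^(m-l)/((m-l).factorial : ℝ) * τ^l) = w l - w (l+1) := by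
    intro l hl
    obtain ⟨hl1, hlm⟩ := Finset.mem_Icc.mp hl
    rcases eq_or_lt_of_le hlm with rfl | hlt
    · simp only [hw]
      rw [if_pos (le_refl l), if_neg (show ¬ (l+1 ≤ l) by omega)]
      simp only [Nat.sub_self, pow_zero, Nat.factorial_zero, Nat.cast_one, zero_add, pow_one]
      have hpow : τ^(l-1) * τ = τ^l := by
        rw [← pow_succ]; congr 1; omega
      linear_combination ((l:ℝ)*τ) * hpow
    · obtain ⟨p, rfl⟩ : ∃ p, l = p + 1 := ⟨l-1, by omega⟩
      obtain ⟨q, rfl⟩ : ∃ q, m = p + q + 2 := ⟨m - p - 2, by omega⟩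
      have e1 : p + q + 2 - (p+1) = q + 1 := by omega
      have e2 : p + q + 2 - (p+1+1) = q := by omega
      have e3 : p + q + 2 - (p+1) + 1 = q + 2 := by omega
      have e4 : p + q + 2 - (p+1+1) + 1 = q + 1 := by omega
      simp only [hw, if_pos (by omega : p+1 ≤ p+q+2), if_pos (by omega : p+1+1 ≤ p+q+2),
        e1, e2, e3, e4, Nat.factorial_succ, Nat.add_sub_cancel]
      have hq : ((q.factorial : ℝ)) ≠ 0 := Nat.cast_ne_zero.mpr q.factorial_ne_zero
      have hq1 : ((q:ℝ) + 1) ≠ 0 := by positivity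
      field_simp
      push_cast
      ring
  rw [S18', S18, Finset.mul_sum, Finset.mul_sum, ← Finset.sum_add_distrib,
    Finset.sum_congr rfl hterm, ← Finset.Ico_add_one_right_eq_Icc, Finset.sum_Ico_eq_sum_range]
  have : ∀ i ∈ Finset.range (m + 1 - 1), w (1+i) - w (1+i+1)
      = (fun i => w (1+i)) i - (fun i => w (1+i)) (i+1) := by
    intro i _; rfl
  rw [Finset.sum_congr rfl this, Finset.sum_range_sub' (fun i => w (1+i))]
  have h1 : (1 : ℕ) + (m + 1 - 1) = m + 1 := by omega
  simp only [h1, hw, if_pos hm, if_neg (by omega : ¬ (m+1 ≤ m))]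
  have : m - 1 + 1 = m := by omega
  rw [this]
  ring

/-- The general solution (4.16) of the system {(F1),(F2)} on a
nonempty open interval avoiding `0`. -/
theorem stmt_18 (κ e b : ℝ) (hb : b ≠ 0)
    (ε : ℝ) (hε : ε = 1 ∨ ε = -1)
    (m : ℕ) (hm : 2 ≤ m)
    (I : Set ℝ) (hIopen : IsOpen I) (hIne : I.Nonempty) (hIconn : I.OrdConnected)
    (h0 : (0:ℝ) ∉ I)
    (φ : ℝ → ℝ)
    (hφ : ∀ τ ∈ I, DifferentiableAt ℝ φ τ)
    (hφ' : ∀ τ ∈ I, DifferentiableAt ℝ (deriv φ) τ)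
    (hF1 : ∀ τ ∈ I,
      τ^4 * deriv (deriv φ) τ + ((2-(m:ℝ))*τ^3 + b*τ^2) * deriv φ τ
        - (m:ℝ)*τ^2 * φ τ = -ε*κ*τ^2/2)
    (hF2 : ∀ τ ∈ I,
      -τ^4 * deriv (deriv φ) τ + (((m:ℝ)-1)*τ^3 - b*τ^2) * deriv φ τ
        + b*τ * φ τ = e*τ) :
    ∃ A B C : ℝ, ∀ τ ∈ I,
      φ τ = A + B * ∑ l ∈ Finset.Icc 1 m, b^(m-l) / ((m-l).factorial : ℝ) * τ^l
        + C * (τ^m * Real.exp (b/τ)) := by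
  have hm1 : 1 ≤ m := by omega
  have hfac : ((m-1).factorial : ℝ) ≠ 0 := Nat.cast_ne_zero.mpr (m-1).factorial_ne_zero
  have hτne : ∀ τ ∈ I, τ ≠ 0 := fun τ hτ h => h0 (h ▸ hτ)
  -- first-order ODE from (F1)+(F2)
  have ode1 : ∀ τ ∈ I, τ^2 * deriv φ τ + (b - (m:ℝ)*τ) * φ τ = e - ε*κ*τ/2 := by
    intro τ hτ
    have hτ0 := hτne τ hτ
    have key : τ * (τ^2 * deriv φ τ + (b - (m:ℝ)*τ) * φ τ) = τ * (e - ε*κ*τ/2) := by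
      linear_combination hF1 τ hτ + hF2 τ hτ
    exact mul_left_cancel₀ hτ0 key
  -- constants
  set A : ℝ := e / b with hA
  set B : ℝ := ((m:ℝ)*e/b - ε*κ/2) * ((m-1).factorial : ℝ) / b^m with hB
  have hAb : b * A = e := by rw [hA]; field_simp
  have hBc : B * (b^m / ((m-1).factorial : ℝ)) = (m:ℝ)*A - ε*κ/2 := by
    rw [hB, hA]
    field_simp
  -- g and its ODE
  set g : ℝ → ℝ := fun τ => φ τ - A - B * S18 b m τ with hg
  have hgD : ∀ τ ∈ I, HasDerivAt g (((m:ℝ)*τ - b)/τ^2 * g τ) τ := by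
    intro τ hτ
    have hτ0 := hτne τ hτ
    have h1 : HasDerivAt g (deriv φ τ - B * S18' b m τ) τ := by
      exact (((hφ τ hτ).hasDerivAt.sub_const A).sub ((hasDerivAt_S18 b m τ).const_mul B))
    have h2 : deriv φ τ - B * S18' b m τ = ((m:ℝ)*τ - b)/τ^2 * g τ := by
      have key : τ^2 * (deriv φ τ - B * S18' b m τ) = ((m:ℝ)*τ - b) * g τ := by
        have := ode1 τ hτ
        have hsum := S18_ode b hm1 τ
        simp only [hg]
        linear_combination this - B * hsum - τ * hBc - hAb
      field_simp [hτ0]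
      linear_combination key
    rwa [h2] at h1
  -- D and its derivative
  set D : ℝ → ℝ := fun τ => τ^m * Real.exp (b/τ) with hD
  have hDne : ∀ τ : ℝ, τ ≠ 0 → D τ ≠ 0 := fun τ hτ0 =>
    mul_ne_zero (pow_ne_zero m hτ0) (Real.exp_ne_zero _)
  have hDD : ∀ τ : ℝ, τ ≠ 0 → HasDerivAt D (((m:ℝ)*τ - b)/τ^2 * D τ) τ := by
    intro τ hτ0
    have hinv : HasDerivAt (fun x : ℝ => b / x) (b * (-(τ^2)⁻¹)) τ := by
      simpa [div_eq_mul_inv] using (hasDerivAt_inv hτ0).const_mul b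
    have hexp : HasDerivAt (fun x : ℝ => Real.exp (b / x))
        (Real.exp (b/τ) * (b * (-(τ^2)⁻¹))) τ := hinv.exp
    have h := (hasDerivAt_pow m τ).mul hexp
    have hval : (m:ℝ) * τ^(m-1) * Real.exp (b/τ) + τ^m * (Real.exp (b/τ) * (b * (-(τ^2)⁻¹)))
        = ((m:ℝ)*τ - b)/τ^2 * D τ := by
      have hpow : τ^(m-1) * τ = τ^m := by
        rw [← pow_succ]; congr 1; omega
      simp only [hD]
      rw [← hpow]
      field_simp [hτ0]
      ring
    rw [hval] at h
    exact h
  -- F = g / D is constant on I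
  set F : ℝ → ℝ := fun τ => g τ / D τ with hF
  have hFD : ∀ τ ∈ I, HasDerivAt F 0 τ := by
    intro τ hτ
    have hτ0 := hτne τ hτ
    have h := (hgD τ hτ).div (hDD τ hτ0) (hDne τ hτ0)
    have : (((m:ℝ)*τ - b)/τ^2 * g τ * D τ - g τ * (((m:ℝ)*τ - b)/τ^2 * D τ)) / (D τ)^2
        = 0 := by ring_nf
    rwa [this] at h
  obtain ⟨x₀, hx₀⟩ := hIne
  have hconst : ∀ τ ∈ I, F τ = F x₀ := by
    intro τ hτ
    have hconv : Convex ℝ I := hIconn.convex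
    have hmv := hconv.norm_image_sub_le_of_norm_hasDerivWithin_le
      (f := F) (f' := fun _ => (0:ℝ)) (C := 0)
      (fun x hx => (hFD x hx).hasDerivWithinAt) (fun x _ => by simp) hx₀ hτ
    have := norm_le_zero_iff.mp (by simpa using hmv)
    exact sub_eq_zero.mp this
  refine ⟨A, B, F x₀, fun τ hτ => ?_⟩
  have hτ0 := hτne τ hτ
  have h1 : g τ = F x₀ * D τ := by
    rw [← hconst τ hτ, hF]
    exact (div_mul_cancel₀ (g τ) (hDne τ hτ0)).symm
  have : φ τ = A + B * S18 b m τ + F x₀ * D τ := by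
    rw [← h1, hg]; ring
  simpa [S18, hD] using this
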